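/- Let d ≥ 2 and let s ∈ S^{d−1} with |s − e_l| ≤ ε where ε > 0 satisfies 1 − √d·ε ≥ 3·max(2,√d)·ε. Let c_1,…,c_d ≥ 0 with c_l = min_j c_j. Then Σ_{j=1}^d ((1 − s_j²) − Σ_{k≠j}|s_k s_j|) c_j ≥ (1/3)(1 − √d ε) Σ_{j=1}^d c_j. -/
import Mathlib


lemma stmt_17_aux (β m Alc TS S cl : ℝ) (hcl : 0 ≤ cl) (hS : cl ≤ S)
    (hm : 3 * m ≤ β) (hβ : 0 < β) (h1 : β * S ≤ TS) (h2 : -(m * cl) ≤ Alc) :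
    Alc + TS ≥ 1/3 * β * (cl + S) := by
  nlinarith [mul_nonneg (sub_nonneg.mpr hS) hβ.le,
    mul_nonneg hcl (by linarith : (0:ℝ) ≤ β - 3 * m)]

open Finset in
/-- For `s ∈ S^{d−1}` close to `e_l`, `ε` small, and nonnegative `c_j` with minimum at `l`:
`Σ_j ((1 − s_j²) − Σ_{k≠j}|s_k s_j|) c_j ≥ (1/3)(1 − √d ε) Σ_j c_j`. -/
theorem stmt_17 (d : ℕ) (hd : 2 ≤ d) (s : EuclideanSpace ℝ (Fin d)) (hs : ‖s‖ = 1)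
    (l : Fin d) (ε : ℝ) (hε : 0 < ε)
    (hsl : ‖s - EuclideanSpace.single l (1:ℝ)‖ ≤ ε)
    (hεsmall : 1 - Real.sqrt d * ε ≥ 3 * max 2 (Real.sqrt d) * ε)
    (c : Fin d → ℝ) (hc : ∀ j, 0 ≤ c j) (hcl : ∀ j, c l ≤ c j) :
    ∑ j, ((1 - (s j)^2) - ∑ k ∈ Finset.univ.erase j, |s k * s j|) * c j
      ≥ (1/3) * (1 - Real.sqrt d * ε) * ∑ j, c j := by
  have hsqd : (0:ℝ) ≤ Real.sqrt d := Real.sqrt_nonneg _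
  -- sum of squares is 1
  have hsum : ∑ j, (s j)^2 = 1 := by
    have h := EuclideanSpace.norm_eq s
    rw [hs] at h
    have h2 : ∑ i, ‖s i‖^2 = 1 := Real.sqrt_eq_one.mp h.symm
    simpa [Real.norm_eq_abs, sq_abs] using h2
  -- distance bound coordinatewise
  have hdiff : ∑ j, (s j - if j = l then 1 else 0)^2 ≤ ε^2 := by
    have h := EuclideanSpace.norm_eq (s - EuclideanSpace.single l (1:ℝ))
    have hnn : 0 ≤ ∑ i, ‖(s - EuclideanSpace.single l (1:ℝ)) i‖^2 :=
      Finset.sum_nonneg fun i _ => sq_nonneg _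
    have h2 : ∑ i, ‖(s - EuclideanSpace.single l (1:ℝ)) i‖^2 ≤ ε^2 := by
      nlinarith [Real.sq_sqrt hnn, hsl, h,
        Real.sqrt_nonneg (∑ i, ‖(s - EuclideanSpace.single l (1:ℝ)) i‖^2)]
    have h3 : ∀ i, ‖(s - EuclideanSpace.single l (1:ℝ)) i‖^2
        = (s i - if i = l then 1 else 0)^2 := by
      intro i
      simp [Real.norm_eq_abs, sq_abs, EuclideanSpace.single_apply]
    calc ∑ j, (s j - if j = l then 1 else 0)^2
        = ∑ i, ‖(s - EuclideanSpace.single l (1:ℝ)) i‖^2 := by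
          exact (Finset.sum_congr rfl fun i _ => h3 i).symm
      _ ≤ ε^2 := h2
  have hterm : ∀ j, (s j - if j = l then 1 else 0)^2 ≤ ε^2 := fun j =>
    le_trans (Finset.single_le_sum (f := fun k => (s k - if k = l then 1 else 0)^2)
      (fun k _ => sq_nonneg _) (mem_univ j)) hdiff
  have habs : ∀ j, j ≠ l → |s j| ≤ ε := by
    intro j hj
    have h := hterm j
    rw [if_neg hj, sub_zero] at h
    nlinarith [abs_nonneg (s j), sq_abs (s j)]
  have hsl2 : (s l)^2 ≤ 1 := by
    have h := Finset.single_le_sum (f := fun k => (s k)^2) (fun k _ => sq_nonneg _) (mem_univ l)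
    rw [hsum] at h; exact h
  have habsl : |s l| ≤ 1 := by nlinarith [abs_nonneg (s l), sq_abs (s l)]
  -- Cauchy–Schwarz: full sum of abs
  have hT : ∑ k, |s k| ≤ Real.sqrt d := by
    have h1 : (∑ k, |s k|)^2 ≤ (univ : Finset (Fin d)).card * ∑ k, |s k|^2 :=
      sq_sum_le_card_mul_sum_sq
    have h2 : ∑ k, |s k|^2 = 1 := by simpa [sq_abs] using hsum
    rw [h2, Finset.card_univ, Fintype.card_fin, mul_one] at h1
    have h3 := Real.sqrt_le_sqrt h1
    rwa [Real.sqrt_sq (Finset.sum_nonneg fun k _ => abs_nonneg _)] at h3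
  -- Cauchy–Schwarz: erase l
  have herasesq : ∑ k ∈ univ.erase l, (s k)^2 ≤ ε^2 := by
    calc ∑ k ∈ univ.erase l, (s k)^2
        = ∑ k ∈ univ.erase l, (s k - if k = l then 1 else 0)^2 := by
          refine Finset.sum_congr rfl fun k hk => ?_
          rw [if_neg (Finset.ne_of_mem_erase hk), sub_zero]
      _ ≤ ∑ k, (s k - if k = l then 1 else 0)^2 :=
          Finset.sum_le_sum_of_subset_of_nonneg (Finset.erase_subset l univ)
            (fun k _ _ => sq_nonneg _)
      _ ≤ ε^2 := hdiff
  have hT' : ∑ k ∈ univ.erase l, |s k| ≤ Real.sqrt d * ε := by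
    have h1 : (∑ k ∈ univ.erase l, |s k|)^2 ≤ (univ.erase l).card * ∑ k ∈ univ.erase l, |s k|^2 :=
      sq_sum_le_card_mul_sum_sq
    have h2 : ∑ k ∈ univ.erase l, |s k|^2 ≤ ε^2 := by simpa [sq_abs] using herasesq
    have hcard : ((univ.erase l).card : ℝ) ≤ d := by
      have h := Finset.card_erase_le (s := (univ : Finset (Fin d))) (a := l)
      have : (univ : Finset (Fin d)).card = d := by simp
      exact_mod_cast this ▸ Nat.cast_le.mpr h
    have hcnn : (0:ℝ) ≤ ((univ.erase l).card : ℝ) := Nat.cast_nonneg _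
    have h4 : (∑ k ∈ univ.erase l, |s k|)^2 ≤ (d:ℝ) * ε^2 := by
      calc (∑ k ∈ univ.erase l, |s k|)^2 ≤ ((univ.erase l).card : ℝ) * ε^2 := by
            nlinarith [Finset.sum_nonneg (fun k (_ : k ∈ univ.erase l) => abs_nonneg (s k))]
        _ ≤ (d:ℝ) * ε^2 := by nlinarith
    have h5 := Real.sqrt_le_sqrt h4
    rw [Real.sqrt_sq (Finset.sum_nonneg fun k _ => abs_nonneg _)] at h5
    calc ∑ k ∈ univ.erase l, |s k| ≤ Real.sqrt ((d:ℝ) * ε^2) := h5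
      _ = Real.sqrt d * ε := by
          rw [Real.sqrt_mul (Nat.cast_nonneg d), Real.sqrt_sq hε.le]
  -- rewrite inner sums
  have hA : ∀ j, ∑ k ∈ univ.erase j, |s k * s j| = (∑ k ∈ univ.erase j, |s k|) * |s j| := by
    intro j
    rw [Finset.sum_mul]
    exact Finset.sum_congr rfl fun k _ => abs_mul _ _
  -- bound for j ≠ l
  have hAj : ∀ j ∈ univ.erase l,
      1 - Real.sqrt d * ε ≤ (1 - (s j)^2) - ∑ k ∈ univ.erase j, |s k * s j| := by
    intro j hj
    have hjl := Finset.ne_of_mem_erase hj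
    rw [hA j, Finset.sum_erase_eq_sub (mem_univ j)]
    have h1 : |s j| ≤ ε := habs j hjl
    have h2 : (∑ k, |s k|) * |s j| ≤ Real.sqrt d * ε := mul_le_mul hT h1 (abs_nonneg _) hsqd
    nlinarith [sq_abs (s j), abs_nonneg (s j)]
  -- bound for l
  have hAl : -(Real.sqrt d * ε) ≤ (1 - (s l)^2) - ∑ k ∈ univ.erase l, |s k * s l| := by
    rw [hA l]
    have h2 : (∑ k ∈ univ.erase l, |s k|) * |s l| ≤ Real.sqrt d * ε := by
      calc (∑ k ∈ univ.erase l, |s k|) * |s l| ≤ (Real.sqrt d * ε) * 1 :=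
            mul_le_mul hT' habsl (abs_nonneg _) (by positivity)
        _ = Real.sqrt d * ε := mul_one _
    linarith
  -- split sums
  have hsplit1 : ∑ j, ((1 - (s j)^2) - ∑ k ∈ univ.erase j, |s k * s j|) * c j
      = ((1 - (s l)^2) - ∑ k ∈ univ.erase l, |s k * s l|) * c l
        + ∑ j ∈ univ.erase l, ((1 - (s j)^2) - ∑ k ∈ univ.erase j, |s k * s j|) * c j :=
    (Finset.add_sum_erase _ _ (mem_univ l)).symm
  have hsplit2 : ∑ j, c j = c l + ∑ j ∈ univ.erase l, c j :=
    (Finset.add_sum_erase _ _ (mem_univ l)).symm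
  have hsum_lb : (1 - Real.sqrt d * ε) * ∑ j ∈ univ.erase l, c j
      ≤ ∑ j ∈ univ.erase l, ((1 - (s j)^2) - ∑ k ∈ univ.erase j, |s k * s j|) * c j := by
    rw [Finset.mul_sum]
    exact Finset.sum_le_sum fun j hj => mul_le_mul_of_nonneg_right (hAj j hj) (hc j)
  have hl_lb : -(Real.sqrt d * ε) * c l
      ≤ ((1 - (s l)^2) - ∑ k ∈ univ.erase l, |s k * s l|) * c l :=
    mul_le_mul_of_nonneg_right hAl (hc l)
  obtain ⟨j0, hj0⟩ := Fintype.exists_ne_of_one_lt_card (by simp; omega) l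
  have hS : c l ≤ ∑ j ∈ univ.erase l, c j :=
    le_trans (hcl j0) (Finset.single_le_sum (fun j _ => hc j)
      (Finset.mem_erase.mpr ⟨hj0, mem_univ j0⟩))
  have hmax1 : Real.sqrt d ≤ max 2 (Real.sqrt d) := le_max_right _ _
  have hmax2 : (2:ℝ) ≤ max 2 (Real.sqrt d) := le_max_left _ _
  have hkey : 3 * (Real.sqrt d * ε) ≤ 1 - Real.sqrt d * ε := by nlinarith
  have hβpos : 0 < 1 - Real.sqrt d * ε := by nlinarith
  rw [hsplit1, hsplit2]
  have hSnn : 0 ≤ ∑ j ∈ univ.erase l, c j := Finset.sum_nonneg fun j _ => hc j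
  refine stmt_17_aux (1 - Real.sqrt d * ε) (Real.sqrt d * ε) _ _ _ _ (hc l) hS hkey hβpos hsum_lb ?_
  rw [← neg_mul]; exact hl_lb
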